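/- In the polynomial ring k[s,t], for any 1 ≤ r ≤ e−1, the degree-r graded component of R (under the grading where a monomial s^u t^v with d | u+v has degree (u+v)/d) consists of all monomials s^u t^{rd−u} with 0 ≤ u ≤ rd except exactly the r monomials t^{rd}, s t^{rd−1}, ..., s^{r−1} t^{rd−r+1}; in particular its dimension is rd + 1 − r. -/

import Mathlib

open MvPolynomial

/-- Generators of the coordinate ring `R` of the weighted rational curve of type `(d,e)`. -/
noncomputable def wrcGens8 (k : Type*) [Field k] (d e : ℕ) : Set (MvPolynomial (Fin 2) k) :=
  ((fun i => X 0 ^ (d - i) * X 1 ^ i) '' Set.Iic (d - 1)) ∪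
  ((fun j => X 0 ^ (e - 1 - j) * X 1 ^ (d * e - (e - 1) + j)) '' Set.Iic (e - 1))

/-- The invariant satisfied by all monomials of `R`. -/
def good8 (d e : ℕ) (m : Fin 2 →₀ ℕ) : Prop :=
  m 0 + m 1 ≤ d * m 0 ∨ d * e ≤ m 0 + m 1

lemma good8_add {d e : ℕ} {m₁ m₂ : Fin 2 →₀ ℕ} (h₁ : good8 d e m₁) (h₂ : good8 d e m₂) :
    good8 d e (m₁ + m₂) := by
  unfold good8 at *
  simp only [Finsupp.add_apply]
  rcases h₁ with h₁ | h₁ <;> rcases h₂ with h₂ | h₂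
  · left; rw [mul_add]; omega
  · right; omega
  · right; omega
  · right; omega

lemma good8_zero (d e : ℕ) : good8 d e 0 := by
  left; simp

/-- The subalgebra of polynomials all of whose monomials satisfy the invariant. -/
noncomputable def S8 (k : Type*) [Field k] (d e : ℕ) :
    Subalgebra k (MvPolynomial (Fin 2) k) where
  carrier := {p | ∀ m ∈ p.support, good8 d e m}
  mul_mem' := by
    intro a b ha hb m hm
    have := MvPolynomial.support_mul a b hm
    rw [Finset.mem_add] at this
    obtain ⟨m₁, hm₁, m₂, hm₂, rfl⟩ := this
    exact good8_add (ha m₁ hm₁) (hb m₂ hm₂)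
  one_mem' := by
    intro m hm
    rw [MvPolynomial.mem_support_iff] at hm
    by_cases h : m = 0
    · subst h; exact good8_zero d e
    · exfalso; apply hm
      rw [show (1 : MvPolynomial (Fin 2) k) = C 1 by simp, MvPolynomial.coeff_C,
        if_neg (fun h' => h h'.symm)]
  add_mem' := by
    intro a b ha hb m hm
    have := MvPolynomial.support_add hm
    rw [Finset.mem_union] at this
    rcases this with h | h
    · exact ha m h
    · exact hb m h
  zero_mem' := by
    intro m hm
    simp at hm
  algebraMap_mem' := by
    intro c m hm
    rw [MvPolynomial.mem_support_iff] at hm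
    by_cases h : m = 0
    · subst h; exact good8_zero d e
    · exfalso; apply hm
      rw [MvPolynomial.algebraMap_eq, MvPolynomial.coeff_C, if_neg (fun h' => h h'.symm)]

lemma support_X_pow_mul_X_pow (k : Type*) [Field k] (a b : ℕ) :
    ((X 0 : MvPolynomial (Fin 2) k) ^ a * X 1 ^ b).support =
      {Finsupp.single 0 a + Finsupp.single 1 b} := by
  classical
  rw [MvPolynomial.X_pow_eq_monomial, MvPolynomial.X_pow_eq_monomial,
    MvPolynomial.monomial_mul, MvPolynomial.support_monomial]
  simp

lemma wrcGens8_subset_S8 (k : Type*) [Field k] (d e : ℕ) (hd : 1 ≤ d) (he : 2 ≤ e) :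
    wrcGens8 k d e ⊆ (S8 k d e : Set (MvPolynomial (Fin 2) k)) := by
  rintro x (⟨i, hi, rfl⟩ | ⟨j, hj, rfl⟩) <;> intro m hm <;>
    rw [support_X_pow_mul_X_pow, Finset.mem_singleton] at hm <;> subst hm
  · -- degree-d generators : s-exponent at least 1
    rw [Set.mem_Iic] at hi
    have h0 : ((Finsupp.single (0 : Fin 2) (d - i) + Finsupp.single 1 i : Fin 2 →₀ ℕ)) 0 = d - i := by
      simp [Finsupp.single_apply]
    have h1 : ((Finsupp.single (0 : Fin 2) (d - i) + Finsupp.single 1 i : Fin 2 →₀ ℕ)) 1 = i := by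
      simp [Finsupp.single_apply]
    unfold good8
    rw [h0, h1]
    left
    have hone : 1 ≤ d - i := by omega
    calc (d - i) + i = d := by omega
      _ = d * 1 := (mul_one d).symm
      _ ≤ d * (d - i) := Nat.mul_le_mul_left d hone
  · -- degree-de generators
    rw [Set.mem_Iic] at hj
    have h0 : ((Finsupp.single (0 : Fin 2) (e - 1 - j) +
        Finsupp.single 1 (d * e - (e - 1) + j) : Fin 2 →₀ ℕ)) 0 = e - 1 - j := by
      simp [Finsupp.single_apply]
    have h1 : ((Finsupp.single (0 : Fin 2) (e - 1 - j) +
        Finsupp.single 1 (d * e - (e - 1) + j) : Fin 2 →₀ ℕ)) 1 = d * e - (e - 1) + j := by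
      simp [Finsupp.single_apply]
    unfold good8
    rw [h0, h1]
    right
    have hle : e ≤ d * e := Nat.le_mul_of_pos_left e (by omega)
    generalize d * e = N at *
    omega

lemma mem_adjoin_of_le (k : Type*) [Field k] (d e : ℕ) (hd : 1 ≤ d) :
    ∀ r : ℕ, 1 ≤ r → ∀ u : ℕ, r ≤ u → u ≤ r * d →
      (X 0 : MvPolynomial (Fin 2) k) ^ u * X 1 ^ (r * d - u) ∈
        Algebra.adjoin k (wrcGens8 k d e) := by
  intro r hr
  induction r, hr using Nat.le_induction with
  | base =>
    intro u hu1 hu2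
    rw [one_mul] at hu2 ⊢
    apply Algebra.subset_adjoin
    left
    exact ⟨d - u, by simp only [Set.mem_Iic]; omega, by dsimp only; rw [show d - (d - u) = u by omega]⟩
  | succ r hr ih =>
    intro u hu1 hu2
    have ha1 : 1 ≤ min d (u - r) := by omega
    set a := min d (u - r) with ha
    have hale : a ≤ d := min_le_left _ _
    have h2 : r ≤ u - a := by omega
    have h3 : u - a ≤ r * d := by
      rcases le_or_gt d (u - r) with h | h
      · have : a = d := by omega
        have : u ≤ (r + 1) * d := hu2
        have : (r + 1) * d = r * d + d := by ring
        omega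
      · have : a = u - r := by omega
        have : 1 ≤ r * d := Nat.one_le_iff_ne_zero.mpr (by positivity)
        calc u - a = r := by omega
          _ ≤ r * d := Nat.le_mul_of_pos_right r (by omega)
    have key : (X 0 : MvPolynomial (Fin 2) k) ^ u * X 1 ^ ((r + 1) * d - u) =
        (X 0 ^ a * X 1 ^ (d - a)) * (X 0 ^ (u - a) * X 1 ^ (r * d - (u - a))) := by
      rw [mul_mul_mul_comm, ← pow_add, ← pow_add]
      congr 2
      · omega
      · have : (r + 1) * d = r * d + d := by ring
        omega
    rw [key]
    refine mul_mem ?_ (ih (u - a) h2 h3)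
    apply Algebra.subset_adjoin
    left
    exact ⟨d - a, by simp only [Set.mem_Iic]; omega, by dsimp only; rw [show d - (d - a) = a by omega]⟩

lemma deg2 (m : Fin 2 →₀ ℕ) : m.degree = m 0 + m 1 := by
  rw [Finsupp.degree_apply, Finset.sum_subset (Finset.subset_univ m.support)
    (fun i _ h => Finsupp.notMem_support_iff.mp h), Fin.sum_univ_two]

/-- For `1 ≤ r ≤ e−1`, the monomial `s^u t^{rd−u}` (with `u ≤ rd`) lies in `R` iff `r ≤ u`
(so exactly the `r` monomials `t^{rd}, …, s^{r−1}t^{rd−r+1}` are missing), and the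
degree-`r` graded component of `R` has dimension `rd + 1 − r`. -/
theorem stmt8 (k : Type*) [Field k] (d e : ℕ) (hd : 1 ≤ d) (he : 2 ≤ e)
    (R : Subalgebra k (MvPolynomial (Fin 2) k))
    (hR : R = Algebra.adjoin k (wrcGens8 k d e))
    (r : ℕ) (hr1 : 1 ≤ r) (hr2 : r ≤ e - 1) :
    (∀ u : ℕ, u ≤ r * d →
      ((X 0 : MvPolynomial (Fin 2) k) ^ u * X 1 ^ (r * d - u) ∈ R ↔ r ≤ u)) ∧
    Module.finrank k
      ↥(Subalgebra.toSubmodule R ⊓ homogeneousSubmodule (Fin 2) k (r * d)) =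
      r * d + 1 - r := by
  have hRS : R ≤ S8 k d e := by
    rw [hR]
    exact Algebra.adjoin_le (wrcGens8_subset_S8 k d e hd he)
  have hrdlt : r * d < d * e := by
    have h : (r + 1) * d ≤ e * d := Nat.mul_le_mul_right d (by omega)
    have h2 : (r + 1) * d = r * d + d := by ring
    have h3 : e * d = d * e := mul_comm e d
    omega
  -- from good8 and total degree r*d ≥ u, deduce r ≤ m 0
  have key_good : ∀ m : Fin 2 →₀ ℕ, good8 d e m → m 0 + m 1 = r * d → r ≤ m 0 := by
    intro m hm hsum
    rcases hm with hm | hm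
    · rw [hsum] at hm
      exact Nat.le_of_mul_le_mul_left (by rw [mul_comm r d] at hm; exact hm) (by omega)
    · omega
  have hfwd : ∀ u : ℕ, u ≤ r * d →
      ((X 0 : MvPolynomial (Fin 2) k) ^ u * X 1 ^ (r * d - u) ∈ R ↔ r ≤ u) := by
    intro u hu
    constructor
    · intro hmem
      have hS := hRS hmem
      have := hS (Finsupp.single 0 u + Finsupp.single 1 (r * d - u))
        (by rw [support_X_pow_mul_X_pow]; exact Finset.mem_singleton_self _)
      have h0 : ((Finsupp.single (0 : Fin 2) u + Finsupp.single 1 (r * d - u) : Fin 2 →₀ ℕ)) 0 = u := by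
        simp [Finsupp.single_apply]
      have h1 : ((Finsupp.single (0 : Fin 2) u + Finsupp.single 1 (r * d - u) : Fin 2 →₀ ℕ)) 1 = r * d - u := by
        simp [Finsupp.single_apply]
      have hr := key_good _ this (by rw [h0, h1]; omega)
      rwa [h0] at hr
    · intro hu2
      rw [hR]
      exact mem_adjoin_of_le k d e hd r hr1 u hu2 hu
  refine ⟨hfwd, ?_⟩
  -- the family of monomials
  set g : ℕ → (Fin 2 →₀ ℕ) := fun u => Finsupp.single 0 u + Finsupp.single 1 (r * d - u) with hg
  set f : ℕ → MvPolynomial (Fin 2) k := fun u => monomial (g u) 1 with hf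
  have hfX : ∀ u, f u = (X 0 : MvPolynomial (Fin 2) k) ^ u * X 1 ^ (r * d - u) := by
    intro u
    rw [hf, MvPolynomial.X_pow_eq_monomial, MvPolynomial.X_pow_eq_monomial,
      MvPolynomial.monomial_mul, mul_one]
  have hg0 : ∀ u, g u 0 = u := by intro u; simp [hg, Finsupp.single_apply]
  have hg1 : ∀ u, g u 1 = r * d - u := by intro u; simp [hg, Finsupp.single_apply]
  have hspan : Subalgebra.toSubmodule R ⊓ homogeneousSubmodule (Fin 2) k (r * d) =
      Submodule.span k (Set.range fun u : (Finset.Icc r (r * d) : Finset ℕ) => f u) := by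
    apply le_antisymm
    · intro p hp
      rw [Submodule.mem_inf] at hp
      obtain ⟨hpR, hph⟩ := hp
      rw [Subalgebra.mem_toSubmodule] at hpR
      rw [mem_homogeneousSubmodule] at hph
      nth_rewrite 1 [p.as_sum]
      apply Submodule.sum_mem
      intro m hm
      have hcoeff : coeff m p ≠ 0 := MvPolynomial.mem_support_iff.mp hm
      have hdeg : m 0 + m 1 = r * d := by
        have := hph hcoeff
        change (Finsupp.weight (fun _ => 1)) m = r * d at this
        rw [← Finsupp.degree_eq_weight_one, deg2] at this
        exact this
      have hgood := hRS hpR m hm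
      have hm0 : r ≤ m 0 := key_good m hgood hdeg
      have hmeq : m = g (m 0) := by
        ext i
        fin_cases i
        · show m 0 = g (m 0) 0
          rw [hg0]
        · show m 1 = g (m 0) 1
          rw [hg1]; omega
      have : monomial m (coeff m p) = coeff m p • f (m 0) := by
        rw [hf, MvPolynomial.smul_monomial, smul_eq_mul, mul_one, hmeq, hg0]
      rw [this]
      apply Submodule.smul_mem
      apply Submodule.subset_span
      exact ⟨⟨m 0, Finset.mem_Icc.mpr ⟨hm0, by omega⟩⟩, rfl⟩
    · rw [Submodule.span_le]
      rintro _ ⟨⟨u, hu⟩, rfl⟩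
      rw [Finset.mem_Icc] at hu
      simp only [Submodule.mem_inf]
      constructor
      · show f u ∈ Subalgebra.toSubmodule R
        rw [Subalgebra.mem_toSubmodule, hfX]
        exact (hfwd u hu.2).mpr hu.1
      · show f u ∈ homogeneousSubmodule (Fin 2) k (r * d)
        rw [mem_homogeneousSubmodule, hf]
        apply isHomogeneous_monomial
        rw [deg2, hg0, hg1]
        omega
  rw [hspan]
  have hginj : Function.Injective fun u : (Finset.Icc r (r * d) : Finset ℕ) => g u := by
    intro u v huv
    apply Subtype.ext
    have h := congrArg (fun x : Fin 2 →₀ ℕ => x 0) huv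
    simpa only [hg0] using h
  have hli : LinearIndependent k (fun u : (Finset.Icc r (r * d) : Finset ℕ) => f u) := by
    have h := (MvPolynomial.basisMonomials (Fin 2) k).linearIndependent.comp
      (fun u : (Finset.Icc r (r * d) : Finset ℕ) => g u) hginj
    rw [MvPolynomial.coe_basisMonomials] at h
    exact h
  rw [finrank_span_eq_card hli, Fintype.card_coe, Nat.card_Icc]
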